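/- Let H_{ij} = e_i e_jᵀ − e_j e_iᵀ ∈ ℝ^{n×n} and let i, j, i', j' be four distinct indices. Define C = π(H_{ii'} + H_{jj'}). Then exp(C/2)ᵀ · H_{i'j'} · exp(C/2) = H_{ij}. -/

import Mathlib

open Matrix
open Nat

lemma stdBasisMatrix_transpose {n : ℕ} (i j : Fin n) (c : ℝ) :
    (Matrix.single i j c)ᵀ = Matrix.single j i c := by
  ext a b
  simp [Matrix.single, and_comm]

set_option maxHeartbeats 1000000 in
lemma exp_cube {n : ℕ} (A : Matrix (Fin n) (Fin n) ℝ) (hA : A ^ 3 = -A) (t : ℝ) :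
    NormedSpace.exp (t • A) =
      1 + Real.sin t • A + (1 - Real.cos t) • (A ^ 2) := by
  have hodd : ∀ m : ℕ, A ^ (2 * m + 1) = ((-1 : ℝ) ^ m) • A := by
    intro m
    induction m with
    | zero => simp
    | succ k ih =>
      have h2 : A ^ (2 * (k + 1) + 1) = A ^ (2 * k + 1) * A ^ 2 := by
        rw [show 2 * (k + 1) + 1 = (2 * k + 1) + 2 from by ring, pow_add]
      rw [h2, ih, smul_mul_assoc]
      have h3 : A * A ^ 2 = -A := by
        have := pow_succ' A 2
        rw [← this]; exact hA
      calc ((-1:ℝ)^k) • (A * A ^ 2) = ((-1:ℝ)^k) • (-A) := by rw [h3]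
        _ = ((-1:ℝ)^(k+1)) • A := by rw [pow_succ]; simp
  have heven : ∀ k : ℕ, A ^ (2 * (k + 1)) = ((-1 : ℝ) ^ k) • A ^ 2 := by
    intro k
    have : A ^ (2 * (k + 1)) = A ^ (2 * k + 1) * A := by
      rw [show 2 * (k + 1) = (2 * k + 1) + 1 from by ring, pow_succ]
    rw [this, hodd k, smul_mul_assoc, ← sq]
  rw [NormedSpace.exp_eq_tsum ℝ]
  refine HasSum.tsum_eq ?_
  have ho : HasSum (fun k : ℕ => ((2 * k + 1)! : ℝ)⁻¹ • (t • A) ^ (2 * k + 1))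
      (Real.sin t • A) := by
    have := (Real.hasSum_sin t).smul_const A
    refine this.congr_fun fun k => ?_
    rw [smul_pow, hodd k, smul_smul, smul_smul]
    congr 1
    ring
  have he : HasSum (fun k : ℕ => ((2 * k)! : ℝ)⁻¹ • (t • A) ^ (2 * k))
      ((1 : Matrix (Fin n) (Fin n) ℝ) - (-(A ^ 2)) + Real.cos t • (-(A ^ 2))) := by
    have hg : HasSum (fun k : ℕ => ((-1 : ℝ) ^ k * t ^ (2 * k) / (2 * k)!) • (-(A ^ 2)))
        (Real.cos t • (-(A ^ 2))) := (Real.hasSum_cos t).smul_const _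
    have h0 : ((-1 : ℝ) ^ 0 * t ^ (2 * 0) / (2 * 0)!) • (-(A ^ 2)) = -(A ^ 2) := by
      norm_num
    have hupd := hg.update 0 1
    rw [h0] at hupd
    refine hupd.congr_fun fun k => ?_
    match k with
    | 0 => simp [Function.update]
    | (k + 1) =>
      rw [Function.update_of_ne (by omega)]
      rw [smul_pow, heven k, smul_smul, smul_neg, smul_smul, ← neg_smul]
      congr 1
      rw [pow_succ]
      ring
  have h := HasSum.even_add_odd (f := fun m : ℕ => ((m)! : ℝ)⁻¹ • (t • A) ^ m) he ho
  have hv : (1 : Matrix (Fin n) (Fin n) ℝ) + Real.sin t • A + (1 - Real.cos t) • (A ^ 2) =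
      1 - -(A ^ 2) + Real.cos t • -(A ^ 2) + Real.sin t • A := by
    module
  rw [hv]
  exact h

noncomputable def Hmat {n : ℕ} (i j : Fin n) : Matrix (Fin n) (Fin n) ℝ :=
  Matrix.single i j 1 - Matrix.single j i 1

theorem stmt18 {n : ℕ} (i j i' j' : Fin n)
    (h1 : i ≠ j) (h2 : i ≠ i') (h3 : i ≠ j') (h4 : j ≠ i') (h5 : j ≠ j') (h6 : i' ≠ j')
    (C : Matrix (Fin n) (Fin n) ℝ)
    (hC : C = Real.pi • (Hmat i i' + Hmat j j')) :
    (NormedSpace.exp ((1 / 2 : ℝ) • C))ᵀ * Hmat i' j' *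
        NormedSpace.exp ((1 / 2 : ℝ) • C) = Hmat i j := by
  set H := Hmat i i' + Hmat j j' with hH
  have hC2 : (1 / 2 : ℝ) • C = (Real.pi / 2) • H := by
    rw [hC, smul_smul]
    congr 1
    ring
  have hH3 : H ^ 3 = -H := by
    simp only [pow_succ, pow_zero, one_mul, hH, Hmat]
    simp [sub_mul, mul_sub, add_mul, mul_add, Matrix.single_mul_single_same,
      Matrix.single_mul_single_of_ne, h1, h2, h3, h4, h5, h6,
      h1.symm, h2.symm, h3.symm, h4.symm, h5.symm, h6.symm]
    abel
  rw [hC2, exp_cube H hH3, Real.sin_pi_div_two, Real.cos_pi_div_two]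
  simp only [one_smul, sub_zero, pow_two, hH, Hmat]
  simp [sub_mul, mul_sub, add_mul, mul_add, Matrix.single_mul_single_same,
    Matrix.single_mul_single_of_ne, h1, h2, h3, h4, h5, h6,
    h1.symm, h2.symm, h3.symm, h4.symm, h5.symm, h6.symm,
    Matrix.transpose_add, Matrix.transpose_sub, Matrix.transpose_one,
    stdBasisMatrix_transpose]
  abel
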